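/- In a normal category (pointed regular category in which every regular epimorphism is a normal epimorphism), given an extremally epic cospan (k : X → A, s : B → A) and arrows f : X → Y, g : B → Y, the arrows f and g commute relatively to (k,s) if and only if their relative commutator [f,g]_{k,s} is the zero subobject of Y. Here [f,g]_{k,s} is the image of the composite [f,g] ∘ ι, where ι : X ◇_{k,s} B → X + B is the kernel of the canonical arrow [k,s] : X + B → A, and [f,g] : X + B → Y is induced by f and g. -/

import Mathlib

open CategoryTheory CategoryTheory.Limits

/-- In a normal category (pointed regular, every regular/strong epi is a normal
epi), given an extremally epic cospan `(k, s)` and arrows `f : X ⟶ Y`, `g : B ⟶ Y`, the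
arrows `f` and `g` commute relatively to `(k, s)` if and only if their relative commutator
`[f,g]_{k,s}` — the image of `[f,g] ∘ ker([k,s])` — is the zero subobject of `Y`. -/
theorem relative_commute_iff_commutator_isZero {C : Type*} [Category C]
    [HasZeroMorphisms C] [HasZeroObject C] [HasFiniteLimits C] [HasKernels C]
    [HasBinaryCoproducts C] [HasImages C]
    (hnormal : ∀ {P Q : C} (q : P ⟶ Q), StrongEpi q → Nonempty (NormalEpi q))
    {X A B Y : C} (k : X ⟶ A) (s : B ⟶ A)
    (hext : ∀ {M : C} (m : M ⟶ A), Mono m →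
      (∃ k' : X ⟶ M, k' ≫ m = k) → (∃ s' : B ⟶ M, s' ≫ m = s) → IsIso m)
    (f : X ⟶ Y) (g : B ⟶ Y) :
    (∃ φ : A ⟶ Y, k ≫ φ = f ∧ s ≫ φ = g) ↔
      IsZero (image (kernel.ι (coprod.desc k s) ≫ coprod.desc f g)) := by
  set q := coprod.desc k s with hq
  constructor
  · rintro ⟨φ, hk, hs⟩
    have hfg : coprod.desc f g = q ≫ φ := by
      apply coprod.hom_ext <;> simp [hq, hk, hs]
    have hw : kernel.ι q ≫ coprod.desc f g = 0 := by
      rw [hfg, ← Category.assoc, kernel.condition, zero_comp]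
    exact (isZero_zero C).of_iso (imageZero' hw)
  · intro hz
    -- the composite is zero
    have hw : kernel.ι q ≫ coprod.desc f g = 0 := by
      have h1 : image.ι (kernel.ι q ≫ coprod.desc f g) = 0 := hz.eq_of_src _ _
      rw [← image.fac (kernel.ι q ≫ coprod.desc f g), h1, comp_zero]
    -- q is an epimorphism
    have hepi : Epi q := by
      constructor
      intro Z a b hab
      have : IsIso (equalizer.ι a b) := by
        apply hext _ inferInstance
        · exact ⟨coprod.inl ≫ equalizer.lift q hab, by simp only [hq, Category.assoc, equalizer.lift_ι]; exact coprod.inl_desc _ _⟩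
        · exact ⟨coprod.inr ≫ equalizer.lift q hab, by simp only [hq, Category.assoc, equalizer.lift_ι]; exact coprod.inr_desc _ _⟩
      calc a = inv (equalizer.ι a b) ≫ equalizer.ι a b ≫ a := by simp
        _ = inv (equalizer.ι a b) ≫ equalizer.ι a b ≫ b := by rw [equalizer.condition]
        _ = b := by simp
    -- q is a strong epimorphism
    have hstrong : StrongEpi q := by
      refine ⟨hepi, fun Z W z hz' => ⟨fun {u v} sq => ?_⟩⟩
      -- pullback of z along v
      have hiso : IsIso (pullback.snd z v) := by
        apply hext _ inferInstance
        · exact ⟨coprod.inl ≫ pullback.lift u q sq.w, by simp only [hq, Category.assoc, pullback.lift_snd]; exact coprod.inl_desc _ _⟩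
        · exact ⟨coprod.inr ≫ pullback.lift u q sq.w, by simp only [hq, Category.assoc, pullback.lift_snd]; exact coprod.inr_desc _ _⟩
      refine ⟨⟨⟨inv (pullback.snd z v) ≫ pullback.fst z v, ?_, ?_⟩⟩⟩
      · rw [← pullback.lift_snd u q sq.w, Category.assoc, IsIso.hom_inv_id_assoc,
          pullback.lift_fst]
      · rw [Category.assoc, pullback.condition, IsIso.inv_hom_id_assoc]
    obtain ⟨ne⟩ := hnormal q hstrong
    -- coprod.desc f g kills ne.g, so it descends along the cokernel cofork
    have hkill : ne.g ≫ coprod.desc f g = 0 := by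
      have : ne.g = kernel.lift q ne.g ne.w ≫ kernel.ι q := by simp
      rw [this, Category.assoc, hw, comp_zero]
    obtain ⟨φ, hφ⟩ := CokernelCofork.IsColimit.desc' ne.isColimit (coprod.desc f g) hkill
    refine ⟨φ, ?_, ?_⟩
    · have := coprod.inl ≫= hφ
      rw [← coprod.inl_desc k s, Category.assoc]
      exact this.trans (coprod.inl_desc _ _)
    · have := coprod.inr ≫= hφ
      rw [← coprod.inr_desc k s, Category.assoc]
      exact this.trans (coprod.inr_desc _ _)
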